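/- Let X be a nonempty finite set, m a natural number, D a probability distribution on X, F a family of functions from X to [0,1], γ > 0, and T̄, T̃ : (X × {0,1})^m → [0,1]. Suppose that T̃ is a (Γ_m(F), γ)-regular simulator for T̄ under the distribution on (X × {0,1})^m in which x_1, ..., x_m are drawn i.i.d. from D and y_1, ..., y_m are i.i.d. uniform bits independent of the x_i; that is, |E[C(x, y)·(T̄(x, y) − T̃(x, y))]| ≤ γ for every C ∈ Γ_m(F), where the expectation is over this distribution. Then for every f̃ ∈ F, |E[T̄(x, ỹ)] − E[T̃(x, ỹ)]| ≤ 2^m·γ, where x_1, ..., x_m are drawn i.i.d. from D and each label ỹ_i given x_i is an independent Bernoulli(f̃(x_i)) bit. -/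

import Mathlib

attribute [local instance] Classical.propDecidable

/-- `bern p b` is the probability that a Bernoulli(`p`) bit equals `b`. -/
noncomputable def bern (p : ℝ) (b : Bool) : ℝ := if b then p else 1 - p

/-- Expectation of `S : (X × {0,1})^m → ℝ` when `x 1, …, x m` are drawn i.i.d. from
the distribution `D` on `X` and each label `y i` given `x i` is an independent
Bernoulli(`f (x i)`) bit.  (Taking `f = 1/2` gives i.i.d. uniform labels.) -/
noncomputable def labeledExp {X : Type*} [Fintype X] (m : ℕ)
    (D : X → ℝ) (f : X → ℝ) (S : (Fin m → X) → (Fin m → Bool) → ℝ) : ℝ :=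
  ∑ x : Fin m → X, ∑ y : Fin m → Bool,
    (∏ i, D (x i)) * (∏ i, bern (f (x i)) (y i)) * S x y

/-- **Tester simulation.** If `T̃` is a `(Γ_m(F), γ)`-regular simulator for `T̄` under the
distribution where `x i` are i.i.d. `D` and the labels are i.i.d. uniform bits — the
consistency indicators in `Γ_m(F)` being `(x, y) ↦ 1[∀ i, y i = 1[f (x i) ≥ t i]]` for
`f ∈ F` and thresholds `t` — then for every `f̃ ∈ F`, the expectations of `T̄` and `T̃`
on samples with Bernoulli(`f̃`) labels differ by at most `2^m * γ`. -/

lemma ite_not_real (c : Prop) {h1 : Decidable (¬ c)} {h2 : Decidable c} :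
    (@ite ℝ (¬ c) h1 1 0) = 1 - (@ite ℝ c h2 1 0) := by
  by_cases hc : c
  · rw [if_neg (not_not_intro hc), if_pos hc]; ring
  · rw [if_pos hc, if_neg hc]; ring

lemma threshold_rep (S : Finset ℝ) (hS : ∀ p ∈ S, p ∈ Set.Icc (0:ℝ) 1) :
    ∃ (n : ℕ) (w t : Fin n → ℝ), (∀ j, 0 ≤ w j) ∧ (∑ j, w j = 1) ∧
      ∀ p ∈ S, ∀ b : Bool,
        ∑ j, w j * (if (b = true ↔ t j ≤ p) then (1:ℝ) else 0) = bern p b := by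
  classical
  set L := S.sort (· ≤ ·) with hL
  set len := L.length with hlen
  set g : ℕ → ℝ := fun k =>
    if hk : 1 ≤ k ∧ k ≤ len then L.get ⟨k-1, by omega⟩ else if k = 0 then 0 else 1 with hg
  have hmemL : ∀ k (h : k < len), L.get ⟨k, h⟩ ∈ S := by
    intro k h
    rw [← Finset.mem_sort (· ≤ ·)]
    exact List.get_mem _ _
  have hsmono : ∀ (a b : Fin len) , a < b → L.get a < L.get b := by
    intro a b hab
    exact (Finset.sortedLT_sort S).strictMono_get hab
  have hg0 : g 0 = 0 := by simp [hg]
  have hgmid : ∀ k, 1 ≤ k → k ≤ len → ∀ (h : k - 1 < len), g k = L.get ⟨k-1, h⟩ := by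
    intro k h1 h2 h
    simp only [hg]
    rw [dif_pos ⟨h1, h2⟩]
  have hgtop : ∀ k, len < k → g k = 1 := by
    intro k hk
    simp only [hg]
    rw [dif_neg (by omega), if_neg (by omega)]
  have hgmono : ∀ k, g k ≤ g (k + 1) := by
    intro k
    rcases Nat.eq_zero_or_pos k with rfl | hk
    · rw [hg0]
      rcases Nat.eq_zero_or_pos len with h0 | h1
      · rw [hgtop 1 (by omega)]; norm_num
      · rw [hgmid 1 le_rfl h1 (by omega)]
        exact (hS _ (hmemL 0 h1)).1
    · by_cases h1 : k + 1 ≤ len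
      · rw [hgmid k hk (by omega) (by omega), hgmid (k+1) (by omega) h1 (by omega)]
        exact le_of_lt (hsmono _ _ (by simp [Fin.lt_def]; omega))
      · by_cases h2 : k ≤ len
        · rw [hgtop (k+1) (by omega), hgmid k hk h2 (by omega)]
          exact (hS _ (hmemL _ _)).2
        · rw [hgtop k (by omega), hgtop (k+1) (by omega)]
  have htot : ∑ j : Fin (len+1), (g (j+1) - g j) = 1 := by
    rw [Fin.sum_univ_eq_sum_range (fun k => g (k+1) - g k), Finset.sum_range_sub,
      hg0, hgtop (len+1) (by omega)]
    ring
  refine ⟨len + 1, fun j => g (j + 1) - g j,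
      fun j => if h : (j:ℕ) < len then L.get ⟨j, h⟩ else 2, ?_, htot, ?_⟩
  · intro j; have := hgmono j; dsimp only; linarith
  · intro p hp b
    have hpL : p ∈ L := by rw [Finset.mem_sort (· ≤ ·)]; exact hp
    obtain ⟨idx, hidx⟩ := List.mem_iff_get.mp hpL
    have hiff : ∀ j : Fin (len + 1),
        ((if h : (j:ℕ) < len then L.get ⟨j, h⟩ else 2) ≤ p ↔ (j:ℕ) ≤ (idx:ℕ)) := by
      intro j
      by_cases h : (j:ℕ) < len
      · rw [dif_pos h]
        constructor
        · intro hle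
          by_contra hgt
          have : L.get idx < L.get ⟨j, h⟩ := hsmono _ _ (by simp [Fin.lt_def]; omega)
          rw [hidx] at this; linarith
        · intro hle
          rcases eq_or_lt_of_le hle with heq | hlt
          · have : (⟨(j:ℕ), h⟩ : Fin len) = idx := by apply Fin.ext; simpa using heq
            rw [this, hidx]
          · have : L.get ⟨j,h⟩ < L.get idx := hsmono _ _ (by simp [Fin.lt_def]; omega)
            rw [hidx] at this; linarith
      · rw [dif_neg h]
        have h1 : p ≤ 1 := (hS p hp).2
        have h2 : (idx:ℕ) < len := idx.isLt
        constructor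
        · intro hle; linarith
        · intro hle; omega
    have hkey : ∑ j : Fin (len+1), (g (j+1) - g j) *
        (if (if h : (j:ℕ) < len then L.get ⟨j, h⟩ else 2) ≤ p then (1:ℝ) else 0) = p := by
      have heq : ∀ j : Fin (len+1), (g (j+1) - g j) *
          (if (if h : (j:ℕ) < len then L.get ⟨j, h⟩ else 2) ≤ p then (1:ℝ) else 0)
          = if (j:ℕ) ≤ (idx:ℕ) then g ((j:ℕ)+1) - g j else 0 := by
        intro j
        rw [if_congr (hiff j) rfl rfl]
        split <;> ring
      rw [Finset.sum_congr rfl (fun j _ => heq j),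
        Fin.sum_univ_eq_sum_range (fun k => if k ≤ (idx:ℕ) then g (k+1) - g k else 0)]
      have hsub : ∑ k ∈ Finset.range (len+1), (if k ≤ (idx:ℕ) then g (k+1) - g k else 0)
          = ∑ k ∈ Finset.range ((idx:ℕ)+1), (if k ≤ (idx:ℕ) then g (k+1) - g k else 0) := by
        refine (Finset.sum_subset (Finset.range_subset_range.2 (by have := idx.isLt; omega)) ?_).symm
        intro k hk hk2
        simp only [Finset.mem_range] at hk hk2
        rw [if_neg (by omega)]
      rw [hsub, Finset.sum_congr rfl (fun k hk => if_pos (by simp at hk; omega)),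
        Finset.sum_range_sub, hg0]
      have h1 : g ((idx:ℕ)+1) = p := by
        have hi : (idx:ℕ) < len := idx.isLt
        rw [hgmid _ (by omega) (by omega) (by simpa using hi)]
        rw [← hidx]
        congr 1
      rw [h1]; ring
    cases b
    · calc ∑ j : Fin (len+1), (g ((j:ℕ)+1) - g j) *
            (if ((false = true) ↔ ((if h : (j:ℕ) < len then L.get ⟨j, h⟩ else 2) ≤ p)) then (1:ℝ) else 0)
          = ∑ j : Fin (len+1), (g ((j:ℕ)+1) - g j) *
            (1 - (if ((if h : (j:ℕ) < len then L.get ⟨j, h⟩ else 2) ≤ p) then (1:ℝ) else 0)) := by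
            refine Finset.sum_congr rfl (fun j _ => ?_)
            rw [if_congr (by simp : ((false = true) ↔ ((if h : (j:ℕ) < len then L.get ⟨j, h⟩ else 2) ≤ p)) ↔ ¬ ((if h : (j:ℕ) < len then L.get ⟨j, h⟩ else 2) ≤ p)) rfl rfl,
              ite_not_real]
        _ = (∑ j : Fin (len+1), (g ((j:ℕ)+1) - g j)) - ∑ j : Fin (len+1), (g ((j:ℕ)+1) - g j) *
            (if ((if h : (j:ℕ) < len then L.get ⟨j, h⟩ else 2) ≤ p) then (1:ℝ) else 0) := by
            rw [← Finset.sum_sub_distrib]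
            exact Finset.sum_congr rfl (fun j _ => by ring)
        _ = 1 - p := by rw [htot, hkey]
        _ = bern p false := by simp [bern]
    · have hsimp : ∀ j : Fin (len+1),
          (((true = true) ↔ ((if h : (j:ℕ) < len then L.get ⟨j, h⟩ else 2) ≤ p))
          ↔ ((if h : (j:ℕ) < len then L.get ⟨j, h⟩ else 2) ≤ p)) := by
        intro j; simp
      rw [Finset.sum_congr rfl (fun j _ => by rw [if_congr (hsimp j) rfl rfl]), hkey]
      simp [bern]

theorem stmt_6 {X : Type*} [Fintype X] [Nonempty X] (m : ℕ)
    (D : X → ℝ) (hD0 : ∀ x, 0 ≤ D x) (hD1 : ∑ x, D x = 1)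
    (F : Set (X → ℝ)) (hF : ∀ f ∈ F, ∀ x, f x ∈ Set.Icc (0 : ℝ) 1)
    (γ : ℝ) (hγ : 0 < γ)
    (Tbar Ttil : (Fin m → X) → (Fin m → Bool) → ℝ)
    (hTbar : ∀ x y, Tbar x y ∈ Set.Icc (0 : ℝ) 1)
    (hTtil : ∀ x y, Ttil x y ∈ Set.Icc (0 : ℝ) 1)
    (hreg : ∀ f ∈ F, ∀ t : Fin m → ℝ,
      |labeledExp m D (fun _ => (1 : ℝ) / 2)
        (fun x y =>
          (if ∀ i, (y i = true ↔ t i ≤ f (x i)) then (1 : ℝ) else 0) *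
            (Tbar x y - Ttil x y))| ≤ γ) :
    ∀ ftil ∈ F,
      |labeledExp m D ftil Tbar - labeledExp m D ftil Ttil| ≤ 2 ^ m * γ := by
  classical
  intro ftil hftil
  obtain ⟨n, w, t, hw0, hw1, hwb⟩ := threshold_rep (Finset.image ftil Finset.univ)
    (by
      intro p hp
      obtain ⟨x, -, rfl⟩ := Finset.mem_image.mp hp
      exact hF ftil hftil x)
  have hbern : ∀ (x : X) (b : Bool),
      bern (ftil x) b = ∑ j, w j * (if (b = true ↔ t j ≤ ftil x) then (1:ℝ) else 0) :=
    fun x b => (hwb _ (Finset.mem_image.mpr ⟨x, Finset.mem_univ x, rfl⟩) b).symm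
  have h2 : (2:ℝ)^m * (1/2)^m = 1 := by
    rw [← mul_pow]; norm_num
  have gen : ∀ a b c : ℝ, a * b * c = 2^m * (a * (1/2)^m * (b * c)) := by
    intro a b c; linear_combination (-(a*b*c)) * h2
  set T : (Fin m → X) → (Fin m → Bool) → ℝ := fun x y => Tbar x y - Ttil x y with hT
  have hsub : labeledExp m D ftil Tbar - labeledExp m D ftil Ttil = labeledExp m D ftil T := by
    simp only [labeledExp, hT, ← Finset.sum_sub_distrib]
    exact Finset.sum_congr rfl fun x _ => Finset.sum_congr rfl fun y _ => by ring
  set E : (Fin m → Fin n) → ℝ := fun τ => ∑ x : Fin m → X, ∑ y : Fin m → Bool,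
      (∏ i, D (x i)) *
        (if ∀ i, (y i = true ↔ t (τ i) ≤ ftil (x i)) then (1:ℝ) else 0) * T x y with hE
  -- key decomposition
  have key : labeledExp m D ftil T = ∑ τ : Fin m → Fin n, (∏ i, w (τ i)) * E τ := by
    rw [labeledExp]
    have step1 : ∀ (x : Fin m → X) (y : Fin m → Bool),
        (∏ i, D (x i)) * (∏ i, bern (ftil (x i)) (y i)) * T x y
          = ∑ τ : Fin m → Fin n, (∏ i, w (τ i)) * ((∏ i, D (x i)) *
              (if ∀ i, (y i = true ↔ t (τ i) ≤ ftil (x i)) then (1:ℝ) else 0) * T x y) := by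
      intro x y
      have h1 : (∏ i, bern (ftil (x i)) (y i))
          = ∑ τ : Fin m → Fin n, ∏ i,
              (w (τ i) * (if (y i = true ↔ t (τ i) ≤ ftil (x i)) then (1:ℝ) else 0)) := by
        rw [← Fintype.prod_sum
          (fun (i : Fin m) (j : Fin n) => w j * (if (y i = true ↔ t j ≤ ftil (x i)) then (1:ℝ) else 0))]
        exact Finset.prod_congr rfl fun i _ => hbern (x i) (y i)
      rw [h1, Finset.mul_sum, Finset.sum_mul]
      refine Finset.sum_congr rfl fun τ _ => ?_
      rw [Finset.prod_mul_distrib, Fintype.prod_boole]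
      ring
    calc ∑ x : Fin m → X, ∑ y : Fin m → Bool,
          (∏ i, D (x i)) * (∏ i, bern (ftil (x i)) (y i)) * T x y
        = ∑ x : Fin m → X, ∑ y : Fin m → Bool, ∑ τ : Fin m → Fin n,
            (∏ i, w (τ i)) * ((∏ i, D (x i)) *
              (if ∀ i, (y i = true ↔ t (τ i) ≤ ftil (x i)) then (1:ℝ) else 0) * T x y) :=
          Finset.sum_congr rfl fun x _ => Finset.sum_congr rfl fun y _ => step1 x y
      _ = ∑ x : Fin m → X, ∑ τ : Fin m → Fin n, ∑ y : Fin m → Bool,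
            (∏ i, w (τ i)) * ((∏ i, D (x i)) *
              (if ∀ i, (y i = true ↔ t (τ i) ≤ ftil (x i)) then (1:ℝ) else 0) * T x y) :=
          Finset.sum_congr rfl fun x _ => Finset.sum_comm
      _ = ∑ τ : Fin m → Fin n, ∑ x : Fin m → X, ∑ y : Fin m → Bool,
            (∏ i, w (τ i)) * ((∏ i, D (x i)) *
              (if ∀ i, (y i = true ↔ t (τ i) ≤ ftil (x i)) then (1:ℝ) else 0) * T x y) :=
          Finset.sum_comm
      _ = ∑ τ : Fin m → Fin n, (∏ i, w (τ i)) * E τ := by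
          refine Finset.sum_congr rfl fun τ _ => ?_
          rw [hE, Finset.mul_sum]
          exact Finset.sum_congr rfl fun x _ => (Finset.mul_sum _ _ _).symm
  -- E τ is 2^m times the uniform-label expectation appearing in hreg
  have hEτ : ∀ τ : Fin m → Fin n, E τ = 2^m *
      labeledExp m D (fun _ => (1:ℝ)/2)
        (fun x y => (if ∀ i, (y i = true ↔ t (τ i) ≤ ftil (x i)) then (1:ℝ) else 0) * T x y) := by
    intro τ
    rw [labeledExp, hE, Finset.mul_sum]
    refine Finset.sum_congr rfl fun x _ => ?_
    rw [Finset.mul_sum]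
    refine Finset.sum_congr rfl fun y _ => ?_
    have hhalf : (∏ i, bern ((fun _ : X => (1:ℝ)/2) (x i)) (y i)) = ((1:ℝ)/2)^m := by
      calc (∏ i, bern ((fun _ : X => (1:ℝ)/2) (x i)) (y i))
          = ∏ _i : Fin m, ((1:ℝ)/2) := by
            refine Finset.prod_congr rfl fun i _ => ?_
            cases y i <;> simp [bern] <;> norm_num
        _ = ((1:ℝ)/2)^m := by simp
    rw [hhalf]
    exact gen _ _ _
  -- bound each term
  have hbd : ∀ τ : Fin m → Fin n, |E τ| ≤ 2^m * γ := by
    intro τ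
    rw [hEτ τ, abs_mul, abs_of_nonneg (by positivity : (0:ℝ) ≤ (2:ℝ)^m)]
    refine mul_le_mul_of_nonneg_left ?_ (by positivity)
    have := hreg ftil hftil (fun i => t (τ i))
    simpa only [hT] using this
  -- weights sum to one
  have hwsum : ∑ τ : Fin m → Fin n, ∏ i, w (τ i) = 1 := by
    rw [← Fintype.prod_sum (fun (_ : Fin m) (j : Fin n) => w j)]
    simp [hw1]
  rw [hsub, key]
  calc |∑ τ : Fin m → Fin n, (∏ i, w (τ i)) * E τ|
      ≤ ∑ τ : Fin m → Fin n, |(∏ i, w (τ i)) * E τ| := Finset.abs_sum_le_sum_abs _ _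
    _ ≤ ∑ τ : Fin m → Fin n, (∏ i, w (τ i)) * (2^m * γ) := by
        refine Finset.sum_le_sum fun τ _ => ?_
        rw [abs_mul, abs_of_nonneg (Finset.prod_nonneg fun i _ => hw0 (τ i))]
        exact mul_le_mul_of_nonneg_left (hbd τ) (Finset.prod_nonneg fun i _ => hw0 (τ i))
    _ = 2^m * γ := by rw [← Finset.sum_mul, hwsum, one_mul]
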